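/- Let δ ∈ (0,1/3], r = δ/(2-δ), and γ = (1-r²)/(1+r²). Then the map G₁*(z) = z(γz-1)/(z-γ) satisfies |(G₁*)'(z) - γ| ≤ 6γ/7 whenever |z-1| ≥ 7δ/4. -/
import Mathlib
set_option maxHeartbeats 1000000


/-- For δ ∈ (0,1/3], r = δ/(2-δ), γ = (1-r²)/(1+r²), the map
`G₁*(z) = z(γz-1)/(z-γ)` satisfies `|(G₁*)'(z) - γ| ≤ 6γ/7` whenever `|z-1| ≥ 7δ/4`. -/
theorem stmt0 (δ : ℝ) (hδ : δ ∈ Set.Ioc (0:ℝ) (1/3)) :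
    let r : ℝ := δ / (2 - δ)
    let γ : ℝ := (1 - r^2) / (1 + r^2)
    ∀ z : ℂ, 7 * δ / 4 ≤ ‖z - 1‖ →
      ‖deriv (fun w : ℂ => w * ((γ:ℂ) * w - 1) / (w - (γ:ℂ))) z - (γ:ℂ)‖ ≤ 6 * γ / 7 := by
  obtain ⟨hδ0, hδ1⟩ := hδ
  intro r γ z hz
  have h2 : (0:ℝ) < 2 - δ := by linarith
  have hrdef : r = δ / (2 - δ) := rfl
  have hγdef : γ = (1 - r^2) / (1 + r^2) := rfl
  clear_value r γ
  have hr0 : 0 < r := by rw [hrdef]; exact div_pos hδ0 h2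
  have hrδ : r ≤ 3/5 * δ := by
    rw [hrdef, div_le_iff₀ h2]
    nlinarith
  have hr2 : r^2 ≤ 9/25 * δ^2 := by nlinarith
  have hr1 : r < 1 := by nlinarith
  have hden : (0:ℝ) < 1 + r^2 := by positivity
  have hγeq : γ * (1 + r^2) = 1 - r^2 := by
    rw [hγdef]; field_simp
  have hγ0 : 0 < γ := by
    rw [hγdef]; apply div_pos <;> nlinarith
  have hγ1 : γ ≤ 1 := by nlinarith
  have h1γ : 1 - γ ≤ 2 * r^2 := by nlinarith
  have h1γ2 : 1 - γ^2 ≤ 4 * r^2 := by nlinarith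
  -- lower bound on ‖z - γ‖
  have hc1 : ‖(γ:ℂ) - 1‖ = 1 - γ := by
    rw [show ((γ:ℂ) - 1) = ((γ - 1 : ℝ) : ℂ) by push_cast; ring, Complex.norm_real,
      Real.norm_eq_abs, abs_of_nonpos (by linarith)]
    ring
  have htri : ‖z - 1‖ - ‖(γ:ℂ) - 1‖ ≤ ‖z - (γ:ℂ)‖ := by
    have := norm_sub_norm_le (z - 1) ((γ:ℂ) - 1)
    simpa using this
  have hzγ : (151/100) * δ ≤ ‖z - (γ:ℂ)‖ := by
    rw [hc1] at htri
    nlinarith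
  have hzγ0 : (0:ℝ) < ‖z - (γ:ℂ)‖ := by nlinarith
  have hne : z - (γ:ℂ) ≠ 0 := by
    intro h
    rw [h, norm_zero] at hzγ0
    exact lt_irrefl 0 hzγ0
  -- compute the derivative
  have hnum : HasDerivAt (fun w : ℂ => w * ((γ:ℂ) * w - 1))
      (1 * ((γ:ℂ) * z - 1) + z * ((γ:ℂ) * 1)) z := by
    exact (hasDerivAt_id z).mul (((hasDerivAt_id z).const_mul (γ:ℂ)).sub_const 1)
  have hden' : HasDerivAt (fun w : ℂ => w - (γ:ℂ)) 1 z := (hasDerivAt_id z).sub_const _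
  have hd : HasDerivAt (fun w : ℂ => w * ((γ:ℂ) * w - 1) / (w - (γ:ℂ)))
      (((1 * ((γ:ℂ) * z - 1) + z * ((γ:ℂ) * 1)) * (z - (γ:ℂ)) -
        z * ((γ:ℂ) * z - 1) * 1) / (z - (γ:ℂ))^2) z := hnum.div hden' hne
  have hkey : deriv (fun w : ℂ => w * ((γ:ℂ) * w - 1) / (w - (γ:ℂ))) z - (γ:ℂ) =
      (γ:ℂ) * (1 - (γ:ℂ)^2) / (z - (γ:ℂ))^2 := by
    rw [hd.deriv]
    field_simp
    ring
  rw [hkey]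
  rw [norm_div, norm_mul, norm_pow]
  have hn1 : ‖(γ:ℂ)‖ = γ := by
    rw [Complex.norm_real, Real.norm_eq_abs, abs_of_pos hγ0]
  have hn2 : ‖(1 : ℂ) - (γ:ℂ)^2‖ = 1 - γ^2 := by
    rw [show (1 : ℂ) - (γ:ℂ)^2 = ((1 - γ^2 : ℝ) : ℂ) by push_cast; ring,
      Complex.norm_real, Real.norm_eq_abs, abs_of_nonneg (by nlinarith)]
  rw [hn1, hn2]
  have ht2 : ((151/100)*δ)^2 ≤ ‖z - (γ:ℂ)‖^2 := by
    have := mul_le_mul hzγ hzγ (by positivity) (norm_nonneg _)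
    nlinarith
  have hfin : 7 * (1 - γ^2) ≤ 6 * ‖z - (γ:ℂ)‖^2 := by nlinarith
  rw [div_le_div_iff₀ (by positivity) (by norm_num)]
  nlinarith [mul_le_mul_of_nonneg_left hfin hγ0.le]
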